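/- arXiv:2601.01607 — 2 statements merged into one kernel-verified Lean document; each statement's English description precedes it below -/
import Mathlib

section
/- Let μ_n = (q_n,s_n), for n = 1,2,..., and μ = (q,s) be IC, IR, and NPT Γ-mechanisms with extended buyer payoff functions b_n and b respectively. If every μ_n is monotonic, b_n converges pointwise to b on ℝ^k, and μ is seller favorable, then μ is monotonic as well, i.e., s(y) ≥ s(x) whenever y ≥ x coordinatewise in ℝ_+^k. -/
open MeasureTheory Filter

noncomputable section

abbrev E (k : ℕ) := EuclideanSpace ℝ (Fin k)

def orthant (k : ℕ) : Set (E k) := {x | ∀ i, 0 ≤ x i}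

/-- The dot product `g · x` on `ℝ^k`. -/
def dotp {k : ℕ} (g x : E k) : ℝ := ∑ i, g i * x i

def IsAlloc {k : ℕ} (Γ : Set (E k)) (q : E k → E k) : Prop :=
  ∀ x ∈ orthant k, q x ∈ Γ

def IsIC {k : ℕ} (q : E k → E k) (s : E k → ℝ) : Prop :=
  ∀ x ∈ orthant k, ∀ y ∈ orthant k, dotp (q x) x - s x ≥ dotp (q y) x - s y

def IsIR {k : ℕ} (q : E k → E k) (s : E k → ℝ) : Prop :=
  ∀ x ∈ orthant k, 0 ≤ dotp (q x) x - s x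

def IsNPT {k : ℕ} (s : E k → ℝ) : Prop :=
  ∀ x ∈ orthant k, 0 ≤ s x

/-- The set of subgradients of `f` at `x`. -/
def Subgrad {k : ℕ} (f : E k → ℝ) (x : E k) : Set (E k) :=
  {g | ∀ y, f y - f x ≥ dotp g (y - x)}

/-- `b ∈ B_Γ`: convex on `ℝ^k`, `b 0 = 0`, and a subgradient in `Γ` at every point. -/
def BClass {k : ℕ} (Γ : Set (E k)) (b : E k → ℝ) : Prop :=
  ConvexOn ℝ Set.univ b ∧ b 0 = 0 ∧ ∀ x, (Subgrad b x ∩ Γ).Nonempty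

/-- One-sided directional derivative `f′(x;y) = lim_{δ→0⁺} (f(x+δy)-f(x))/δ`. -/
def dirDeriv {k : ℕ} (b : E k → ℝ) (x y : E k) : ℝ :=
  limUnder (nhdsWithin (0:ℝ) (Set.Ioi 0)) fun δ => (b (x + δ • y) - b x) / δ

/-- The extended buyer payoff function `b(x) = sup_{z ∈ ℝ₊^k} [q(z)·x − s(z)]`. -/
def extPayoff {k : ℕ} (q : E k → E k) (s : E k → ℝ) (x : E k) : ℝ :=
  sSup ((fun z => dotp (q z) x - s z) '' orthant k)

def SellerFavorable {k : ℕ} (q : E k → E k) (s : E k → ℝ) : Prop :=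
  ∀ x ∈ orthant k, s x = dirDeriv (extPayoff q s) x x - extPayoff q s x

/-- A monotonic mechanism: payments nondecreasing in the (coordinatewise) valuation. -/
def MonotonicPay {k : ℕ} (s : E k → ℝ) : Prop :=
  ∀ x ∈ orthant k, ∀ y ∈ orthant k, (∀ i, x i ≤ y i) → s x ≤ s y

section aux
open Set

variable {k : ℕ}

lemma zero_mem_orthant : (0 : E k) ∈ orthant k := fun i => by simp

lemma smul_mem_orthant {u : E k} (hu : u ∈ orthant k) {c : ℝ} (hc : 0 ≤ c) :
    c • u ∈ orthant k := fun i => by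
  have h : (c • u) i = c * u i := rfl
  rw [h]; exact mul_nonneg hc (hu i)

lemma dotp_smul_right (g : E k) (c : ℝ) (x : E k) : dotp g (c • x) = c * dotp g x := by
  simp only [dotp, PiLp.smul_apply, smul_eq_mul, Finset.mul_sum]
  exact Finset.sum_congr rfl fun i _ => by ring

lemma dotp_add_right (g x y : E k) : dotp g (x + y) = dotp g x + dotp g y := by
  simp only [dotp, PiLp.add_apply, mul_add]
  exact Finset.sum_add_distrib

lemma dotp_le (g x : E k) : dotp g x ≤ ‖g‖ * ‖x‖ := by
  have h : dotp g x = (inner ℝ g x : ℝ) := by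
    simp [dotp, PiLp.inner_apply, RCLike.inner_apply, conj_trivial, mul_comm]
  rw [h]; exact real_inner_le_norm g x

variable {Γ : Set (E k)} {M : ℝ} {q : E k → E k} {s : E k → ℝ}

lemma payoff_bddAbove (hM : ∀ g ∈ Γ, ‖g‖ ≤ M) (hq : IsAlloc Γ q) (hNPT : IsNPT s) (x : E k) :
    BddAbove ((fun z => dotp (q z) x - s z) '' orthant k) := by
  refine ⟨M * ‖x‖, ?_⟩
  rintro r ⟨w, hw, rfl⟩
  have h1 : dotp (q w) x ≤ ‖q w‖ * ‖x‖ := dotp_le _ _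
  have h2 : ‖q w‖ * ‖x‖ ≤ M * ‖x‖ :=
    mul_le_mul_of_nonneg_right (hM _ (hq w hw)) (norm_nonneg x)
  have h3 := hNPT w hw
  simp only
  linarith

lemma le_extPayoff (hM : ∀ g ∈ Γ, ‖g‖ ≤ M) (hq : IsAlloc Γ q) (hNPT : IsNPT s)
    {w : E k} (hw : w ∈ orthant k) (z : E k) :
    dotp (q w) z - s w ≤ extPayoff q s z :=
  le_csSup (payoff_bddAbove hM hq hNPT z) ⟨w, hw, rfl⟩

lemma extPayoff_eq (hM : ∀ g ∈ Γ, ‖g‖ ≤ M) (hq : IsAlloc Γ q) (hIC : IsIC q s)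
    (hNPT : IsNPT s) {x : E k} (hx : x ∈ orthant k) :
    extPayoff q s x = dotp (q x) x - s x := by
  refine le_antisymm (csSup_le ⟨_, ⟨0, zero_mem_orthant, rfl⟩⟩ ?_)
    (le_extPayoff hM hq hNPT hx x)
  rintro r ⟨w, hw, rfl⟩
  exact hIC x hx w hw

end aux
section aux2
open Set

variable {k : ℕ} {Γ : Set (E k)} {M : ℝ} {q : E k → E k} {s : E k → ℝ}

lemma extPayoff_continuous (hM0 : 0 ≤ M) (hM : ∀ g ∈ Γ, ‖g‖ ≤ M) (hq : IsAlloc Γ q)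
    (hNPT : IsNPT s) : Continuous (extPayoff q s) := by
  have key : ∀ z1 z2 : E k, extPayoff q s z1 ≤ extPayoff q s z2 + M * ‖z1 - z2‖ := by
    intro z1 z2
    refine csSup_le ⟨_, ⟨0, zero_mem_orthant, rfl⟩⟩ ?_
    rintro r ⟨w, hw, rfl⟩
    have h1 : dotp (q w) z2 - s w ≤ extPayoff q s z2 := le_extPayoff hM hq hNPT hw z2
    have h2 : dotp (q w) (z1 - z2) ≤ ‖q w‖ * ‖z1 - z2‖ := dotp_le _ _
    have h3 : ‖q w‖ * ‖z1 - z2‖ ≤ M * ‖z1 - z2‖ :=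
      mul_le_mul_of_nonneg_right (hM _ (hq w hw)) (norm_nonneg _)
    have h4 : dotp (q w) z1 = dotp (q w) z2 + dotp (q w) (z1 - z2) := by
      rw [← dotp_add_right]; congr 1; abel
    simp only
    linarith
  have hlip : LipschitzWith (Real.toNNReal M) (extPayoff q s) := by
    apply LipschitzWith.of_dist_le_mul
    intro z1 z2
    rw [Real.dist_eq, dist_eq_norm, Real.coe_toNNReal M hM0, abs_le]
    have k12 := key z1 z2
    have k21 := key z2 z1
    rw [norm_sub_rev] at k21
    constructor <;> linarith
  exact hlip.continuous

lemma extPayoff_convexOn (hM : ∀ g ∈ Γ, ‖g‖ ≤ M) (hq : IsAlloc Γ q) (hNPT : IsNPT s) :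
    ConvexOn ℝ Set.univ (extPayoff q s) := by
  refine ⟨convex_univ, fun z1 _ z2 _ ta tb hta htb hab => ?_⟩
  refine csSup_le ⟨_, ⟨0, zero_mem_orthant, rfl⟩⟩ ?_
  rintro r ⟨w, hw, rfl⟩
  have h1 := le_extPayoff hM hq hNPT hw z1
  have h2 := le_extPayoff hM hq hNPT hw z2
  have he : dotp (q w) (ta • z1 + tb • z2) - s w
      = ta * (dotp (q w) z1 - s w) + tb * (dotp (q w) z2 - s w) := by
    rw [dotp_add_right, dotp_smul_right, dotp_smul_right]
    linear_combination s w * hab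
  simp only
  rw [he]
  have h3 := mul_le_mul_of_nonneg_left h1 hta
  have h4 := mul_le_mul_of_nonneg_left h2 htb
  simp only [smul_eq_mul]
  linarith

lemma key_lower (hM : ∀ g ∈ Γ, ‖g‖ ≤ M) (hq : IsAlloc Γ q) (hIC : IsIC q s) (hNPT : IsNPT s)
    {u : E k} (hu : u ∈ orthant k) {δ : ℝ} (hδ : 0 < δ) :
    δ * s u ≤ extPayoff q s ((1 + δ) • u) - (1 + δ) * extPayoff q s u := by
  have h1 := le_extPayoff hM hq hNPT hu ((1 + δ) • u)
  have h2 := extPayoff_eq hM hq hIC hNPT hu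
  rw [dotp_smul_right] at h1
  rw [h2]
  nlinarith [h1]

lemma key_upper (hM : ∀ g ∈ Γ, ‖g‖ ≤ M) (hq : IsAlloc Γ q) (hIC : IsIC q s) (hNPT : IsNPT s)
    {u : E k} (hu : u ∈ orthant k) {δ : ℝ} (hδ : 0 < δ) :
    extPayoff q s ((1 + δ) • u) - (1 + δ) * extPayoff q s u ≤ δ * s ((1 + δ) • u) := by
  have hv : (1 + δ) • u ∈ orthant k := smul_mem_orthant hu (by linarith)
  have h1 := extPayoff_eq hM hq hIC hNPT hv
  have h2 := le_extPayoff hM hq hNPT hv u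
  rw [dotp_smul_right] at h1
  have h3 : (1 + δ) * (dotp (q ((1 + δ) • u)) u - s ((1 + δ) • u)) ≤ (1 + δ) * extPayoff q s u :=
    mul_le_mul_of_nonneg_left h2 (by linarith)
  nlinarith [h1, h3]

lemma quot_tendsto (hM : ∀ g ∈ Γ, ‖g‖ ≤ M) (hq : IsAlloc Γ q) (hIC : IsIC q s) (hNPT : IsNPT s)
    {x : E k} (hx : x ∈ orthant k) :
    Filter.Tendsto (fun δ => (extPayoff q s (x + δ • x) - extPayoff q s x) / δ)
      (nhdsWithin (0:ℝ) (Set.Ioi 0))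
      (nhds (sInf ((fun δ => (extPayoff q s (x + δ • x) - extPayoff q s x) / δ) '' Set.Ioi 0))) := by
  have hconvb : ConvexOn ℝ Set.univ (extPayoff q s) := extPayoff_convexOn hM hq hNPT
  have hφ : ConvexOn ℝ Set.univ fun t : ℝ => extPayoff q s (t • x) := by
    have h := hconvb.comp_linearMap (LinearMap.toSpanSingleton ℝ (E k) x)
    exact h
  have hmono : MonotoneOn (fun δ => (extPayoff q s (x + δ • x) - extPayoff q s x) / δ)
      (Set.Ioi (0:ℝ)) := by
    intro δ1 h1 δ2 h2 h12
    have h1' : (0:ℝ) < δ1 := h1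
    have h2' : (0:ℝ) < δ2 := h2
    have key := hφ.secant_mono (a := 1) (x := 1 + δ1) (y := 1 + δ2) (Set.mem_univ _)
      (Set.mem_univ _) (Set.mem_univ _) (by intro h; nlinarith [congrArg (· - 1) h])
      (by intro h; nlinarith [congrArg (· - 1) h]) (by linarith)
    have e1 : ∀ δ : ℝ, (1 + δ) • x = x + δ • x := fun δ => by rw [add_smul, one_smul]
    have e2 : (1:ℝ) • x = x := one_smul _ _
    simp only [e1, e2, add_sub_cancel_left] at key
    exact key
  have hbdd : BddBelow ((fun δ => (extPayoff q s (x + δ • x) - extPayoff q s x) / δ) ''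
      Set.Ioi 0) := by
    refine ⟨dotp (q x) x, ?_⟩
    rintro r ⟨δ, hδ, rfl⟩
    have hδ' : (0:ℝ) < δ := hδ
    simp only
    rw [le_div_iff₀ hδ', mul_comm]
    have h1 := le_extPayoff hM hq hNPT hx (x + δ • x)
    have h2 := extPayoff_eq hM hq hIC hNPT hx
    rw [dotp_add_right, dotp_smul_right] at h1
    linarith
  exact MonotoneOn.tendsto_nhdsGT hmono hbdd

end aux2


/-- a seller-favorable pointwise limit of monotonic IC, IR, NPT
mechanisms is monotonic. -/
theorem stmt9 {k : ℕ} (hk : 1 ≤ k) (Γ : Set (E k)) (hΓne : Γ.Nonempty)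
    (hΓc : IsCompact Γ) (hΓ : Γ ⊆ orthant k)
    (qn : ℕ → E k → E k) (sn : ℕ → E k → ℝ)
    (hqn : ∀ n, IsAlloc Γ (qn n)) (hICn : ∀ n, IsIC (qn n) (sn n))
    (hIRn : ∀ n, IsIR (qn n) (sn n)) (hNPTn : ∀ n, IsNPT (sn n))
    (hMonn : ∀ n, MonotonicPay (sn n))
    (q : E k → E k) (s : E k → ℝ)
    (hq : IsAlloc Γ q) (hIC : IsIC q s) (hIR : IsIR q s) (hNPT : IsNPT s)
    (hconv : ∀ x : E k,
      Tendsto (fun n => extPayoff (qn n) (sn n) x) atTop (nhds (extPayoff q s x)))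
    (hSF : SellerFavorable q s) :
    MonotonicPay s := by
  obtain ⟨R, hR⟩ := hΓc.isBounded.exists_norm_le
  set M := max R 0 with hMdef
  have hM0 : 0 ≤ M := le_max_right _ _
  have hM : ∀ g ∈ Γ, ‖g‖ ≤ M := fun g hg => (hR g hg).trans (le_max_left _ _)
  intro x hx y hy hxy
  set b := extPayoff q s with hbdef
  have hQx := quot_tendsto hM hq hIC hNPT hx
  have hQy := quot_tendsto hM hq hIC hNPT hy
  have hsx : s x = sInf ((fun δ => (b (x + δ • x) - b x) / δ) '' Set.Ioi 0) - b x := by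
    rw [hSF x hx]
    congr 1
    exact hQx.limUnder_eq
  have hsy : s y = sInf ((fun δ => (b (y + δ • y) - b y) / δ) '' Set.Ioi 0) - b y := by
    rw [hSF y hy]
    congr 1
    exact hQy.limUnder_eq
  have key : ∀ ε : ℝ, 0 < ε → s x + b y ≤ (b (y + ε • y) - b y) / ε := by
    intro ε hε
    have stepA : ∀ δ : ℝ, 0 < δ →
        (b ((1 + δ) • x) - (1 + δ) * b x) / δ
          ≤ (b ((1 + ε) • ((1 + δ) • y)) - (1 + ε) * b ((1 + δ) • y)) / ε := by
      intro δ hδ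
      have hchain : ∀ n,
          (extPayoff (qn n) (sn n) ((1 + δ) • x) - (1 + δ) * extPayoff (qn n) (sn n) x) / δ
          ≤ (extPayoff (qn n) (sn n) ((1 + ε) • ((1 + δ) • y))
              - (1 + ε) * extPayoff (qn n) (sn n) ((1 + δ) • y)) / ε := by
        intro n
        have hyδ : (1 + δ) • y ∈ orthant k := smul_mem_orthant hy (by linarith)
        have h1 := key_upper hM (hqn n) (hICn n) (hNPTn n) hx hδ
        have h3 := key_lower hM (hqn n) (hICn n) (hNPTn n) hyδ hε
        have h2 : sn n ((1 + δ) • x) ≤ sn n ((1 + δ) • y) := by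
          refine hMonn n _ (smul_mem_orthant hx (by linarith)) _ hyδ fun i => ?_
          have e1 : ((1 + δ) • x) i = (1 + δ) * x i := rfl
          have e2 : ((1 + δ) • y) i = (1 + δ) * y i := rfl
          rw [e1, e2]
          exact mul_le_mul_of_nonneg_left (hxy i) (by linarith)
        rw [div_le_div_iff₀ hδ hε]
        nlinarith [mul_le_mul_of_nonneg_right h1 hε.le,
          mul_le_mul_of_nonneg_left h2 (mul_nonneg hδ.le hε.le),
          mul_le_mul_of_nonneg_left h3 hδ.le]
      refine le_of_tendsto_of_tendsto'
        (((hconv _).sub ((hconv x).const_mul _)).div_const δ)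
        (((hconv _).sub ((hconv _).const_mul _)).div_const ε) hchain
    have hLHS : Tendsto (fun δ => (b ((1 + δ) • x) - (1 + δ) * b x) / δ)
        (nhdsWithin (0:ℝ) (Set.Ioi 0)) (nhds (s x)) := by
      have h1 := hQx.sub_const (b x)
      rw [← hsx] at h1
      refine h1.congr' ?_
      filter_upwards [self_mem_nhdsWithin] with δ hδ
      have hδ' : (0:ℝ) < δ := hδ
      have e1 : (1 + δ) • x = x + δ • x := by rw [add_smul, one_smul]
      rw [e1]
      field_simp
      ring
    have hRHS : Tendsto (fun δ => (b ((1 + ε) • ((1 + δ) • y)) - (1 + ε) * b ((1 + δ) • y)) / ε)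
        (nhdsWithin (0:ℝ) (Set.Ioi 0)) (nhds ((b ((1 + ε) • y) - (1 + ε) * b y) / ε)) := by
      have hcb : Continuous b := extPayoff_continuous hM0 hM hq hNPT
      have hc1 : Continuous fun δ : ℝ => (1 + δ) • y :=
        (continuous_const.add continuous_id).smul continuous_const
      have hc : Continuous fun δ : ℝ =>
          (b ((1 + ε) • ((1 + δ) • y)) - (1 + ε) * b ((1 + δ) • y)) / ε :=
        ((hcb.comp (hc1.const_smul (1 + ε))).sub (continuous_const.mul (hcb.comp hc1))).div_const ε
      have h00 : ((1:ℝ) + 0) • y = y := by norm_num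
      have h0 : Tendsto (fun δ : ℝ =>
          (b ((1 + ε) • ((1 + δ) • y)) - (1 + ε) * b ((1 + δ) • y)) / ε)
          (nhds (0:ℝ)) (nhds ((b ((1 + ε) • y) - (1 + ε) * b y) / ε)) := by
        simpa [h00] using hc.tendsto 0
      exact h0.mono_left nhdsWithin_le_nhds
    have hfin := le_of_tendsto_of_tendsto hLHS hRHS
      (by filter_upwards [self_mem_nhdsWithin] with δ hδ; exact stepA δ hδ)
    have e : (1 + ε) • y = y + ε • y := by rw [add_smul, one_smul]
    rw [e] at hfin
    have e2 : (b (y + ε • y) - (1 + ε) * b y) / ε = (b (y + ε • y) - b y) / ε - b y := by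
      field_simp
      ring
    rw [e2] at hfin
    linarith
  have h5 : s x + b y ≤ sInf ((fun δ => (b (y + δ • y) - b y) / δ) '' Set.Ioi 0) := by
    refine le_csInf ⟨_, ⟨1, by norm_num, rfl⟩⟩ ?_
    rintro r ⟨δ, hδ, rfl⟩
    exact key δ hδ
  linarith [hsy]
end
end

section
/- Let b : ℝ^k → ℝ be a convex function such that ∇b(x) ∈ Γ for every point x in the set D of points where b is differentiable. Then for every x ∈ ℝ^k and every direction y ∈ ℝ^k there exists a subgradient g ∈ ∂b(x) ∩ Γ that is maximal in the direction y, i.e., g·y = b′(x;y); in particular ∂b(x) ∩ Γ ≠ ∅ for every x ∈ ℝ^k. -/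
open MeasureTheory Filter

noncomputable section

open Metric Topology Set

lemma dotp_eq_inner {k : ℕ} (g x : E k) : dotp g x = (inner ℝ g x : ℝ) := by
  simp [dotp, PiLp.inner_apply, RCLike.inner_apply, mul_comm]

lemma grad_subgrad {k : ℕ} {b : E k → ℝ} (hconv : ConvexOn ℝ Set.univ b) {z : E k}
    (hd : DifferentiableAt ℝ b z) (w : E k) :
    (inner ℝ (gradient b z) (w - z) : ℝ) ≤ b w - b z := by
  set v := w - z with hv
  have hline : HasDerivAt (fun t : ℝ => z + t • v) v 0 := by
    simpa using ((hasDerivAt_id (0:ℝ)).smul_const v).const_add z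
  have hF : HasFDerivAt b (InnerProductSpace.toDual ℝ (E k) (gradient b z)) z :=
    hasGradientAt_iff_hasFDerivAt.1 hd.hasGradientAt
  have hF' : HasFDerivAt b (InnerProductSpace.toDual ℝ (E k) (gradient b z)) (z + (0:ℝ) • v) := by
    simpa using hF
  have hφ : HasDerivAt (fun t : ℝ => b (z + t • v)) ((inner ℝ (gradient b z) v : ℝ)) 0 := by
    have h := hF'.comp_hasDerivAt 0 hline
    rw [InnerProductSpace.toDual_apply_apply] at h
    exact h
  have htend : Tendsto (slope (fun t : ℝ => b (z + t • v)) 0) (𝓝[>] (0:ℝ))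
      (𝓝 ((inner ℝ (gradient b z) v : ℝ))) :=
    (hasDerivAt_iff_tendsto_slope.1 hφ).mono_left
      (nhdsWithin_mono _ (fun t ht => ne_of_gt ht))
  refine le_of_tendsto htend ?_
  filter_upwards [Ioo_mem_nhdsGT_of_mem (by norm_num : (0:ℝ) ∈ Set.Ico 0 1)] with t ht
  have key := hconv.2 (Set.mem_univ z) (Set.mem_univ w) (by linarith [ht.2] : (0:ℝ) ≤ 1 - t)
    ht.1.le (by ring)
  have hzw : (1 - t) • z + t • w = z + t • v := by
    rw [hv]; module
  rw [hzw] at key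
  simp only [smul_eq_mul] at key
  have h0 : (fun t : ℝ => b (z + t • v)) 0 = b z := by simp
  rw [slope_def_field]
  simp only [h0, sub_zero]
  rw [div_le_iff₀ ht.1]
  nlinarith [key]

lemma dense_diff {k : ℕ} {b : E k → ℝ} (hconv : ConvexOn ℝ Set.univ b) (p : E k) {ε : ℝ}
    (hε : 0 < ε) : ∃ z : E k, dist z p < ε ∧ DifferentiableAt ℝ b z := by
  obtain ⟨K, t, ht, hK⟩ := hconv.locallyLipschitz p
  obtain ⟨r, hr, hball⟩ := Metric.mem_nhds_iff.1 ht
  set r' := min r ε with hr'def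
  have hr' : 0 < r' := lt_min hr hε
  have hlip : LipschitzOnWith K b (ball p r') :=
    hK.mono ((ball_subset_ball (min_le_left _ _)).trans hball)
  have hae := hlip.ae_differentiableWithinAt_of_mem (μ := volume)
  by_contra hcon
  push_neg at hcon
  have hsub : ball p r' ⊆ {x | ¬ (x ∈ ball p r' →
      DifferentiableWithinAt ℝ b (ball p r') x)} := by
    intro x hx
    simp only [Set.mem_setOf_eq]
    intro h
    have hdw := h hx
    have hda : DifferentiableAt ℝ b x := hdw.differentiableAt (isOpen_ball.mem_nhds hx)
    exact hcon x (lt_of_lt_of_le (mem_ball.1 hx) (min_le_right _ _)) hda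
  have h0 : volume {x : E k | ¬ (x ∈ ball p r' →
      DifferentiableWithinAt ℝ b (ball p r') x)} = 0 := hae
  have := measure_mono_null hsub h0
  exact (measure_ball_pos volume p hr').ne' this

/-- if a convex `b : ℝ^k → ℝ` has gradient in `Γ` at every point of
differentiability, then at every `x` and in every direction `y` there is a
subgradient `g ∈ ∂b(x) ∩ Γ` maximal in the direction `y`, i.e. `g·y = b′(x;y)`;
in particular `∂b(x) ∩ Γ ≠ ∅` everywhere. -/
theorem stmt16 {k : ℕ} (hk : 1 ≤ k) (Γ : Set (E k)) (hΓne : Γ.Nonempty)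
    (hΓc : IsCompact Γ) (hΓ : Γ ⊆ orthant k)
    (b : E k → ℝ) (hconv : ConvexOn ℝ Set.univ b)
    (hgrad : ∀ x : E k, DifferentiableAt ℝ b x → gradient b x ∈ Γ) :
    (∀ x y : E k, ∃ g : E k, g ∈ Subgrad b x ∩ Γ ∧ dotp g y = dirDeriv b x y) ∧
    (∀ x : E k, (Subgrad b x ∩ Γ).Nonempty) := by
  have main : ∀ x y : E k, ∃ g : E k, g ∈ Subgrad b x ∩ Γ ∧ dotp g y = dirDeriv b x y := by
    intro x y
    obtain ⟨M, hM⟩ := isBounded_iff_forall_norm_le.1 hΓc.isBounded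
    have hM0 : 0 ≤ M := le_trans (norm_nonneg _) (hM _ hΓne.choose_spec)
    obtain ⟨K, t, ht, hKt⟩ := hconv.locallyLipschitz x
    obtain ⟨r, hr, hball⟩ := Metric.mem_nhds_iff.1 ht
    have hlip : LipschitzOnWith K b (ball x r) := hKt.mono hball
    have hK0 : (0:ℝ) ≤ (K : ℝ) := K.coe_nonneg
    -- the slope function and its monotonicity
    set ψ : ℝ → ℝ := fun s => b (x + s • y) with hψdef
    have hψ : ConvexOn ℝ Set.univ ψ := by
      have h2 := hconv.comp_affineMap (AffineMap.lineMap x (x + y))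
      have heq : ψ = (b ∘ (AffineMap.lineMap x (x + y) : ℝ →ᵃ[ℝ] E k)) := by
        funext s; simp [hψdef, AffineMap.lineMap_apply, add_comm]
      rw [heq]
      simpa using h2
    set q : ℝ → ℝ := fun δ => (b (x + δ • y) - b x) / δ with hqdef
    have hqψ : ∀ δ : ℝ, q δ = (ψ δ - ψ 0) / (δ - 0) := by
      intro δ; simp [hqdef, hψdef]
    have hmono : MonotoneOn q (Set.Ioi (0:ℝ)) := by
      intro a ha c hc hac
      rw [hqψ a, hqψ c]
      exact hψ.secant_mono (Set.mem_univ 0) (Set.mem_univ a) (Set.mem_univ c)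
        (ne_of_gt ha) (ne_of_gt hc) hac
    have hbdd : BddBelow (q '' Set.Ioi (0:ℝ)) := by
      refine ⟨(ψ 0 - ψ (-1)) / (0 - (-1)), ?_⟩
      rintro _ ⟨δ, hδ, rfl⟩
      rw [hqψ δ]
      exact hψ.slope_mono_adjacent (Set.mem_univ (-1)) (Set.mem_univ δ) (by norm_num) hδ
    set l : ℝ := sInf (q '' Set.Ioi (0:ℝ)) with hldef
    have htendq : Tendsto q (𝓝[>] (0:ℝ)) (𝓝 l) := hmono.tendsto_nhdsGT hbdd
    have hdd : dirDeriv b x y = l := htendq.limUnder_eq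
    -- the approximating sequence
    set c : ℝ := r / (2 * (1 + ‖y‖)) with hcdef
    have hy1 : (0:ℝ) < 1 + ‖y‖ := by positivity
    have hc : 0 < c := by rw [hcdef]; positivity
    set δ : ℕ → ℝ := fun n => c / (n + 1) with hδdef
    have hδpos : ∀ n, 0 < δ n := fun n => by positivity
    set ε : ℕ → ℝ := fun n => δ n / (n + 1) with hεdef
    have hεpos : ∀ n, 0 < ε n := fun n => by positivity
    have hδc : ∀ n, δ n ≤ c := fun n => by
      rw [hδdef]
      apply div_le_self hc.le
      have : (0:ℝ) ≤ (n : ℝ) := Nat.cast_nonneg n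
      linarith
    have hεδ : ∀ n, ε n ≤ δ n := fun n => by
      rw [hεdef]
      apply div_le_self (hδpos n).le
      have : (0:ℝ) ≤ (n : ℝ) := Nat.cast_nonneg n
      linarith
    choose z hzd hzdiff using fun n => dense_diff hconv (x + δ n • y) (hεpos n)
    have hδy : ∀ n, dist (x + δ n • y) x = δ n * ‖y‖ := by
      intro n
      rw [dist_eq_norm, add_sub_cancel_left, norm_smul, Real.norm_eq_abs,
        abs_of_pos (hδpos n)]
    have hhalf : c * (1 + ‖y‖) = r / 2 := by
      rw [hcdef]; field_simp
    have hzx : ∀ n, dist (z n) x < r := by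
      intro n
      have h1 := dist_triangle (z n) (x + δ n • y) x
      have h2 : δ n * ‖y‖ ≤ c * ‖y‖ := mul_le_mul_of_nonneg_right (hδc n) (norm_nonneg y)
      have h3 : ε n ≤ c := le_trans (hεδ n) (hδc n)
      have h4 : dist (z n) x ≤ ε n + δ n * ‖y‖ := by
        rw [← hδy n] at *
        linarith [(hzd n).le, hδy n]
      nlinarith [norm_nonneg y]
    have hxδball : ∀ n, x + δ n • y ∈ ball x r := by
      intro n
      rw [mem_ball, hδy n]
      have h2 : δ n * ‖y‖ ≤ c * ‖y‖ := mul_le_mul_of_nonneg_right (hδc n) (norm_nonneg y)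
      nlinarith [norm_nonneg y]
    set g : ℕ → E k := fun n => gradient b (z n) with hgdef
    have hgΓ : ∀ n, g n ∈ Γ := fun n => hgrad _ (hzdiff n)
    obtain ⟨G, hGΓ, φ, hφmono, hGlim⟩ := hΓc.tendsto_subseq hgΓ
    -- z tends to x
    have hδ0 : Tendsto δ atTop (𝓝 0) := by
      have := tendsto_one_div_add_atTop_nhds_zero_nat.const_mul c
      rw [mul_zero] at this
      refine this.congr fun n => ?_
      rw [hδdef]; ring
    have hε0 : Tendsto ε atTop (𝓝 0) := by
      have := hδ0.mul tendsto_one_div_add_atTop_nhds_zero_nat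
      rw [mul_zero] at this
      refine this.congr fun n => ?_
      rw [hεdef]; ring
    have hzt : Tendsto z atTop (𝓝 x) := by
      rw [tendsto_iff_dist_tendsto_zero]
      have hub : ∀ n, dist (z n) x ≤ ε n + δ n * ‖y‖ := by
        intro n
        refine le_trans (dist_triangle (z n) (x + δ n • y) x) ?_
        rw [hδy n]
        exact add_le_add_left (hzd n).le _
      have h0 : Tendsto (fun n : ℕ => ε n + δ n * ‖y‖) atTop (𝓝 0) := by
        have := hε0.add (hδ0.mul_const ‖y‖)
        simpa using this
      exact squeeze_zero (fun n => dist_nonneg) hub h0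
    have hzφ : Tendsto (fun m => z (φ m)) atTop (𝓝 x) := hzt.comp hφmono.tendsto_atTop
    -- G is a subgradient at x
    have hGsub : G ∈ Subgrad b x := by
      intro w
      rw [ge_iff_le, dotp_eq_inner]
      have hL : Tendsto (fun m => (inner ℝ (g (φ m)) (w - z (φ m)) : ℝ)) atTop
          (𝓝 ((inner ℝ G (w - x) : ℝ))) := hGlim.inner (tendsto_const_nhds.sub hzφ)
      have hcont : Continuous b := hconv.locallyLipschitz.continuous
      have hR : Tendsto (fun m => b w - b (z (φ m))) atTop (𝓝 (b w - b x)) :=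
        tendsto_const_nhds.sub ((hcont.tendsto x).comp hzφ)
      exact le_of_tendsto_of_tendsto' hL hR (fun m => grad_subgrad hconv (hzdiff (φ m)) w)
    -- upper bound
    have hle : (inner ℝ G y : ℝ) ≤ l := by
      refine le_csInf (Set.nonempty_Ioi.image q) ?_
      rintro _ ⟨δ', hδ', rfl⟩
      have hsg := hGsub (x + δ' • y)
      rw [ge_iff_le, dotp_eq_inner, add_sub_cancel_left, real_inner_smul_right] at hsg
      rw [hqdef]
      rw [le_div_iff₀ hδ']
      linarith [hsg]
    -- lower bound
    have hstep : ∀ n, l ≤ (inner ℝ (g n) y : ℝ) + (M + (K : ℝ)) * (1 / (n + 1)) := by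
      intro n
      have hql : l ≤ q (δ n) := csInf_le hbdd ⟨δ n, hδpos n, rfl⟩
      have h1 : b (z n) - b x ≤ (inner ℝ (g n) (z n - x) : ℝ) := by
        have hgs := grad_subgrad hconv (hzdiff n) x
        have h' : (inner ℝ (g n) (x - z n) : ℝ) = - inner ℝ (g n) (z n - x) := by
          rw [← inner_neg_right, neg_sub]
        rw [hgdef] at *
        linarith [hgs, h'.symm.le, h'.le]
      have h2 : b (x + δ n • y) - b (z n) ≤ (K : ℝ) * ε n := by
        have hd := hlip.dist_le_mul _ (hxδball n) _ (mem_ball.2 (hzx n))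
        have hdd' : dist (x + δ n • y) (z n) ≤ ε n := by
          rw [dist_comm]; exact (hzd n).le
        have habs : b (x + δ n • y) - b (z n) ≤ dist (b (x + δ n • y)) (b (z n)) :=
          le_trans (le_abs_self _) (le_of_eq (Real.dist_eq _ _).symm)
        calc b (x + δ n • y) - b (z n) ≤ (K : ℝ) * dist (x + δ n • y) (z n) :=
              le_trans habs hd
          _ ≤ (K : ℝ) * ε n := mul_le_mul_of_nonneg_left hdd' hK0
      have h3 : (inner ℝ (g n) (z n - x) : ℝ)
          = δ n * inner ℝ (g n) y + inner ℝ (g n) (z n - (x + δ n • y)) := by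
        have hsplit : z n - x = δ n • y + (z n - (x + δ n • y)) := by module
        rw [hsplit, inner_add_right, real_inner_smul_right]
      have h4 : (inner ℝ (g n) (z n - (x + δ n • y)) : ℝ) ≤ M * ε n := by
        calc (inner ℝ (g n) (z n - (x + δ n • y)) : ℝ)
            ≤ ‖g n‖ * ‖z n - (x + δ n • y)‖ := real_inner_le_norm _ _
          _ ≤ M * ε n := by
              apply mul_le_mul (hM _ (hgΓ n)) ?_ (norm_nonneg _) hM0
              rw [← dist_eq_norm]
              exact (hzd n).le
      have hεn : ε n = δ n * (1 / (n + 1)) := by rw [hεdef]; ring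
      have h6 : q (δ n) ≤ (inner ℝ (g n) y : ℝ) + (M + (K : ℝ)) * (1 / (n + 1)) := by
        rw [hqdef]
        rw [div_le_iff₀ (hδpos n)]
        have h5 : b (x + δ n • y) - b x ≤ δ n * inner ℝ (g n) y + (M + (K : ℝ)) * ε n := by
          linarith [h1, h2, h3, h4]
        rw [hεn] at h5
        nlinarith [h5, hδpos n]
      linarith [hql, h6]
    have hge : l ≤ (inner ℝ G y : ℝ) := by
      have h10 : Tendsto (fun m : ℕ => 1 / ((φ m : ℝ) + 1)) atTop (𝓝 0) :=
        tendsto_one_div_add_atTop_nhds_zero_nat.comp hφmono.tendsto_atTop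
      have htend2 : Tendsto
          (fun m => (inner ℝ (g (φ m)) y : ℝ) + (M + (K : ℝ)) * (1 / ((φ m : ℝ) + 1)))
          atTop (𝓝 ((inner ℝ G y : ℝ) + (M + (K : ℝ)) * 0)) :=
        (hGlim.inner tendsto_const_nhds).add (h10.const_mul _)
      have := ge_of_tendsto htend2 (Filter.Eventually.of_forall fun m => hstep (φ m))
      simpa using this
    exact ⟨G, ⟨hGsub, hGΓ⟩, by rw [dotp_eq_inner, hdd]; exact le_antisymm hle hge⟩
  exact ⟨main, fun x => (main x 0).elim fun g hg => ⟨g, hg.1⟩⟩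
end
end
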